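/- Let Σ ∈ ℝ^{(n+m)×(n+m)} be symmetric positive definite with blocks Σ_gg, Σ_gh = Σ_hgᵀ, Σ_hh, let φ_Σ denote the centered Gaussian density on ℝ^{n+m} with covariance Σ, and let q : ℝ^n → ℝ≥0 be any nonnegative function (the likelihood g ↦ p(y|g), which does not depend on h). Suppose (ĝ, ĥ) ∈ ℝ^n × ℝ^m is the unique global maximizer of (g,h) ↦ q(g) · φ_Σ(g,h). Then ĝ is a global maximizer of g ↦ q(g) · φ_{Σ_gg}(g), where φ_{Σ_gg} is the centered Gaussian density on ℝ^n with covariance Σ_gg, and ĥ = Σ_hg Σ_gg⁻¹ ĝ. -/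

import Mathlib

open Matrix

/-- The centered Gaussian probability density on `ι → ℝ` with covariance matrix `S`:
`φ_S(z) = det(2πS)^{-1/2} exp(-zᵀ S⁻¹ z / 2)`. -/
noncomputable def gaussPdf {ι : Type*} [Fintype ι] [DecidableEq ι]
    (S : Matrix ι ι ℝ) (z : ι → ℝ) : ℝ :=
  (Real.sqrt ((2 * Real.pi) ^ Fintype.card ι * S.det))⁻¹ *
    Real.exp (-(z ⬝ᵥ (S⁻¹ *ᵥ z)) / 2)

section Aux

variable {n m : ℕ}

lemma blockA_posDef (A : Matrix (Fin n) (Fin n) ℝ) (B : Matrix (Fin n) (Fin m) ℝ)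
    (D : Matrix (Fin m) (Fin m) ℝ) (hpd : (fromBlocks A B Bᵀ D).PosDef) : A.PosDef := by
  refine .of_dotProduct_mulVec_pos (isHermitian_fromBlocks_iff.mp hpd.1).1 fun x hx => ?_
  have hz : Sum.elim x (0 : Fin m → ℝ) ≠ 0 := by
    intro h
    exact hx (funext fun i => congrFun h (Sum.inl i))
  have := hpd.dotProduct_mulVec_pos hz
  simpa [fromBlocks_mulVec, sumElim_dotProduct_sumElim] using this

lemma schur_posDef (A : Matrix (Fin n) (Fin n) ℝ) (B : Matrix (Fin n) (Fin m) ℝ)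
    (D : Matrix (Fin m) (Fin m) ℝ) (hpd : (fromBlocks A B Bᵀ D).PosDef) :
    (D - Bᵀ * A⁻¹ * B).PosDef := by
  have hApd := blockA_posDef A B D hpd
  haveI := hApd.isUnit.invertible
  have hconj : Bᴴ = Bᵀ := B.conjTranspose_eq_transpose_of_trivial
  refine .of_dotProduct_mulVec_pos ?_ fun y hy => ?_
  · have := (IsHermitian.fromBlocks₁₁ B D hApd.1).mp (by rw [hconj]; exact hpd.1)
    rwa [hconj] at this
  · have hz : Sum.elim (-((A⁻¹ * B) *ᵥ y)) y ≠ 0 := by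
      intro h
      exact hy (funext fun i => congrFun h (Sum.inr i))
    have h2 := hpd.dotProduct_mulVec_pos hz
    have h3 := schur_complement_eq₁₁ (α := ℝ) B D (-((A⁻¹ * B) *ᵥ y)) y hApd.1
    rw [hconj] at h3
    simp only [star_trivial, neg_add_cancel] at h3
    simp only [star_trivial] at h2
    rw [dotProduct_mulVec, h3] at h2
    simp only [star_trivial, dotProduct_mulVec]
    simpa using h2

lemma block_inv (A : Matrix (Fin n) (Fin n) ℝ) (B : Matrix (Fin n) (Fin m) ℝ)
    (D : Matrix (Fin m) (Fin m) ℝ) (hA : IsUnit A.det)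
    (hT : IsUnit (D - Bᵀ * A⁻¹ * B).det) :
    (fromBlocks A B Bᵀ D)⁻¹ =
      fromBlocks (A⁻¹ + A⁻¹ * B * (D - Bᵀ * A⁻¹ * B)⁻¹ * Bᵀ * A⁻¹)
        (-(A⁻¹ * B * (D - Bᵀ * A⁻¹ * B)⁻¹))
        (-((D - Bᵀ * A⁻¹ * B)⁻¹ * Bᵀ * A⁻¹)) (D - Bᵀ * A⁻¹ * B)⁻¹ := by
  set T := D - Bᵀ * A⁻¹ * B with hTdef
  have hAA : A * A⁻¹ = (1 : Matrix (Fin n) (Fin n) ℝ) := mul_nonsing_inv A hA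
  have hTT : T * T⁻¹ = (1 : Matrix (Fin m) (Fin m) ℝ) := mul_nonsing_inv T hT
  have hDT : D * T⁻¹ = 1 + Bᵀ * A⁻¹ * B * T⁻¹ := by
    have h := hTT
    rw [hTdef, Matrix.sub_mul] at h
    rw [sub_eq_iff_eq_add] at h
    rw [h]
  apply inv_eq_right_inv
  have h11 : A * (A⁻¹ + A⁻¹ * B * T⁻¹ * Bᵀ * A⁻¹) + B * -(T⁻¹ * Bᵀ * A⁻¹) = 1 := by
    simp only [Matrix.mul_add, Matrix.mul_neg, Matrix.add_mul, Matrix.one_mul,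
      ← Matrix.mul_assoc, hAA, hDT]
    abel
  have h12 : A * -(A⁻¹ * B * T⁻¹) + B * T⁻¹ = 0 := by
    simp only [Matrix.mul_add, Matrix.mul_neg, Matrix.add_mul, Matrix.one_mul,
      ← Matrix.mul_assoc, hAA, hDT]
    abel
  have h21 : Bᵀ * (A⁻¹ + A⁻¹ * B * T⁻¹ * Bᵀ * A⁻¹) + D * -(T⁻¹ * Bᵀ * A⁻¹) = 0 := by
    simp only [Matrix.mul_add, Matrix.mul_neg, Matrix.add_mul, Matrix.one_mul,
      ← Matrix.mul_assoc, hAA, hDT]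
    abel
  have h22 : Bᵀ * -(A⁻¹ * B * T⁻¹) + D * T⁻¹ = 1 := by
    simp only [Matrix.mul_add, Matrix.mul_neg, Matrix.add_mul, Matrix.one_mul,
      ← Matrix.mul_assoc, hAA, hDT]
    abel
  rw [fromBlocks_multiply, h11, h12, h21, h22, fromBlocks_one]

lemma dp {a b : Type*} [Fintype a] [Fintype b] (M : Matrix a b ℝ) (u : a → ℝ) (v : b → ℝ) :
    u ⬝ᵥ (M *ᵥ v) = (Mᵀ *ᵥ u) ⬝ᵥ v := by
  rw [dotProduct_mulVec, mulVec_transpose]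

lemma quad_decomp (A : Matrix (Fin n) (Fin n) ℝ) (B : Matrix (Fin n) (Fin m) ℝ)
    (D : Matrix (Fin m) (Fin m) ℝ) (hA : IsUnit A.det)
    (hT : IsUnit (D - Bᵀ * A⁻¹ * B).det)
    (hAs : A⁻¹ᵀ = A⁻¹) (hTs : (D - Bᵀ * A⁻¹ * B)⁻¹ᵀ = (D - Bᵀ * A⁻¹ * B)⁻¹)
    (g : Fin n → ℝ) (h : Fin m → ℝ) :
    Sum.elim g h ⬝ᵥ ((fromBlocks A B Bᵀ D)⁻¹ *ᵥ Sum.elim g h)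
      = g ⬝ᵥ (A⁻¹ *ᵥ g) + (h - Bᵀ *ᵥ (A⁻¹ *ᵥ g)) ⬝ᵥ
          ((D - Bᵀ * A⁻¹ * B)⁻¹ *ᵥ (h - Bᵀ *ᵥ (A⁻¹ *ᵥ g))) := by
  have hbi := block_inv A B D hA hT
  set T := D - Bᵀ * A⁻¹ * B with hTdef
  set u := Bᵀ *ᵥ (A⁻¹ *ᵥ g) with hu
  have key : ∀ x : Fin m → ℝ, g ⬝ᵥ (A⁻¹ *ᵥ (B *ᵥ x)) = u ⬝ᵥ x := by
    intro x
    rw [dp, hAs, dp, hu]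
  have key2 : u ⬝ᵥ (T⁻¹ *ᵥ h) = h ⬝ᵥ (T⁻¹ *ᵥ u) := by
    rw [dp, hTs, dotProduct_comm]
  rw [hbi]
  simp only [fromBlocks_mulVec, sumElim_dotProduct_sumElim, add_mulVec, neg_mulVec,
    Matrix.mul_assoc, ← mulVec_mulVec, mulVec_sub, mulVec_add, mulVec_neg,
    dotProduct_add, dotProduct_sub, dotProduct_neg, sub_dotProduct, add_dotProduct,
    neg_dotProduct, Sum.elim_comp_inl, Sum.elim_comp_inr, key, key2]
  ring

lemma gaussPdf_pos {k : ℕ} (S : Matrix (Fin k) (Fin k) ℝ) (hdet : 0 < S.det)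
    (z : Fin k → ℝ) : 0 < gaussPdf S z := by
  unfold gaussPdf
  have h2 : (0:ℝ) < 2 * Real.pi := by positivity
  have : 0 < (2 * Real.pi) ^ Fintype.card (Fin k) * S.det := by positivity
  positivity

lemma gaussPdf_le {k : ℕ} (S : Matrix (Fin k) (Fin k) ℝ) (hS : S.PosDef)
    (z : Fin k → ℝ) : gaussPdf S z ≤ gaussPdf S 0 := by
  unfold gaussPdf
  have hq : 0 ≤ z ⬝ᵥ (S⁻¹ *ᵥ z) := by
    have := hS.inv.posSemidef.dotProduct_mulVec_nonneg z
    simpa using this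
  apply mul_le_mul_of_nonneg_left _ (by positivity)
  rw [Real.exp_le_exp]
  simp only [zero_dotProduct, neg_zero, zero_div]
  linarith

lemma gauss_factor (A : Matrix (Fin n) (Fin n) ℝ) (B : Matrix (Fin n) (Fin m) ℝ)
    (D : Matrix (Fin m) (Fin m) ℝ) (hpd : (fromBlocks A B Bᵀ D).PosDef)
    (g : Fin n → ℝ) (h : Fin m → ℝ) :
    gaussPdf (fromBlocks A B Bᵀ D) (Sum.elim g h)
      = gaussPdf A g * gaussPdf (D - Bᵀ * A⁻¹ * B) (h - Bᵀ *ᵥ (A⁻¹ *ᵥ g)) := by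
  have hApd := blockA_posDef A B D hpd
  have hTpd := schur_posDef A B D hpd
  have hAdet := hApd.det_pos
  have hTdet := hTpd.det_pos
  have hAs : A⁻¹ᵀ = A⁻¹ := by
    have h := hApd.1.inv
    rwa [Matrix.IsHermitian, conjTranspose_eq_transpose_of_trivial] at h
  have hTs : (D - Bᵀ * A⁻¹ * B)⁻¹ᵀ = (D - Bᵀ * A⁻¹ * B)⁻¹ := by
    have h := hTpd.1.inv
    rwa [Matrix.IsHermitian, conjTranspose_eq_transpose_of_trivial] at h
  have hq := quad_decomp A B D hAdet.ne'.isUnit hTdet.ne'.isUnit hAs hTs g h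
  haveI := hApd.isUnit.invertible
  have hdet : (fromBlocks A B Bᵀ D).det = A.det * (D - Bᵀ * A⁻¹ * B).det := by
    rw [det_fromBlocks₁₁, invOf_eq_nonsing_inv]
  unfold gaussPdf
  rw [hq, hdet, Fintype.card_sum, Fintype.card_fin, Fintype.card_fin, pow_add]
  rw [show (2 * Real.pi) ^ n * (2 * Real.pi) ^ m * (A.det * (D - Bᵀ * A⁻¹ * B).det)
      = ((2 * Real.pi) ^ n * A.det) * ((2 * Real.pi) ^ m * (D - Bᵀ * A⁻¹ * B).det) by ring]
  rw [Real.sqrt_mul (by positivity), mul_inv]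
  rw [show -(g ⬝ᵥ (A⁻¹ *ᵥ g) + (h - Bᵀ *ᵥ (A⁻¹ *ᵥ g)) ⬝ᵥ
        ((D - Bᵀ * A⁻¹ * B)⁻¹ *ᵥ (h - Bᵀ *ᵥ (A⁻¹ *ᵥ g)))) / 2
      = -(g ⬝ᵥ (A⁻¹ *ᵥ g)) / 2 + -((h - Bᵀ *ᵥ (A⁻¹ *ᵥ g)) ⬝ᵥ
        ((D - Bᵀ * A⁻¹ * B)⁻¹ *ᵥ (h - Bᵀ *ᵥ (A⁻¹ *ᵥ g)))) / 2 by ring]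
  rw [Real.exp_add]
  ring

end Aux

theorem map_separation {n m : ℕ}
    (Sgg : Matrix (Fin n) (Fin n) ℝ) (Sgh : Matrix (Fin n) (Fin m) ℝ)
    (Shg : Matrix (Fin m) (Fin n) ℝ) (Shh : Matrix (Fin m) (Fin m) ℝ)
    (hsym : Sgh = Shgᵀ)
    (hpd : (Matrix.fromBlocks Sgg Sgh Shg Shh).PosDef)
    (q : (Fin n → ℝ) → ℝ) (hq : ∀ g, 0 ≤ q g)
    (ghat : Fin n → ℝ) (hhat : Fin m → ℝ)
    (hmax : ∀ (g : Fin n → ℝ) (h : Fin m → ℝ),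
      q g * gaussPdf (Matrix.fromBlocks Sgg Sgh Shg Shh) (Sum.elim g h)
        ≤ q ghat * gaussPdf (Matrix.fromBlocks Sgg Sgh Shg Shh) (Sum.elim ghat hhat))
    (huniq : ∀ (g : Fin n → ℝ) (h : Fin m → ℝ),
      q g * gaussPdf (Matrix.fromBlocks Sgg Sgh Shg Shh) (Sum.elim g h)
          = q ghat * gaussPdf (Matrix.fromBlocks Sgg Sgh Shg Shh) (Sum.elim ghat hhat)
        → g = ghat ∧ h = hhat) :
    (∀ g : Fin n → ℝ, q g * gaussPdf Sgg g ≤ q ghat * gaussPdf Sgg ghat)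
    ∧ hhat = Shg *ᵥ (Sgg⁻¹ *ᵥ ghat) := by
  have hC : Shg = Sghᵀ := by rw [hsym, transpose_transpose]
  rw [hC] at hpd hmax huniq ⊢
  set A := Sgg
  set B := Sgh
  set D := Shh
  set T := D - Bᵀ * A⁻¹ * B with hTdef
  have hApd := blockA_posDef A B D hpd
  have hTpd := schur_posDef A B D hpd
  have hfac := gauss_factor A B D hpd
  have hTle : ∀ w : Fin m → ℝ, gaussPdf T w ≤ gaussPdf T 0 := gaussPdf_le T hTpd
  have hT0 : 0 < gaussPdf T 0 := gaussPdf_pos T hTpd.det_pos 0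
  have hApos : ∀ g, 0 < gaussPdf A g := fun g => gaussPdf_pos A hApd.det_pos g
  -- the value of the joint objective at (g, Bᵀ A⁻¹ g)
  have hval : ∀ g : Fin n → ℝ,
      q g * gaussPdf (fromBlocks A B Bᵀ D) (Sum.elim g (Bᵀ *ᵥ (A⁻¹ *ᵥ g)))
        = q g * gaussPdf A g * gaussPdf T 0 := by
    intro g
    rw [hfac, sub_self, mul_assoc]
  have hub : q ghat * gaussPdf (fromBlocks A B Bᵀ D) (Sum.elim ghat hhat)
      ≤ q ghat * gaussPdf A ghat * gaussPdf T 0 := by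
    rw [hfac, ← mul_assoc]
    exact mul_le_mul_of_nonneg_left (hTle _)
      (mul_nonneg (hq _) (hApos _).le)
  constructor
  · intro g
    have h1 := hmax g (Bᵀ *ᵥ (A⁻¹ *ᵥ g))
    rw [hval] at h1
    have h2 : q g * gaussPdf A g * gaussPdf T 0
        ≤ q ghat * gaussPdf A ghat * gaussPdf T 0 := le_trans h1 hub
    exact le_of_mul_le_mul_right h2 hT0
  · have hgex : q ghat * gaussPdf (fromBlocks A B Bᵀ D)
        (Sum.elim ghat (Bᵀ *ᵥ (A⁻¹ *ᵥ ghat)))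
        = q ghat * gaussPdf (fromBlocks A B Bᵀ D) (Sum.elim ghat hhat) := by
      apply le_antisymm (hmax _ _)
      rw [hval]
      calc q ghat * gaussPdf (fromBlocks A B Bᵀ D) (Sum.elim ghat hhat)
          ≤ q ghat * gaussPdf A ghat * gaussPdf T 0 := hub
        _ = q ghat * gaussPdf A ghat * gaussPdf T 0 := rfl
    exact ((huniq ghat (Bᵀ *ᵥ (A⁻¹ *ᵥ ghat)) hgex).2).symm
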